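/- Let σ be a permutation of {1,…,n}. If T(σ) contains values (a,c,b) forming a 132 pattern (i.e. a < b < c and they occur in T(σ) in the order a, c, b), then there exists a value d with d > c such that either (b,d,c,a) is an occurrence of the pattern 2431 in σ (i.e. b,d,c,a occur in σ in this order), or (b,d,a,c) is an occurrence of the pattern 2413 in σ (i.e. b,d,a,c occur in σ in this order) and there is no value e > c such that b,d,a,e,c occur in σ in this order. -/

import Mathlib

private theorem length_takeWhile_ne_lt {w : List ℕ} {m : ℕ} (hm : m ∈ w) :
    (w.takeWhile (· ≠ m)).length < w.length := by
  induction w with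
  | nil => cases hm
  | cons a as ih =>
    by_cases ha : a = m
    · subst ha
      simp [List.takeWhile_cons]
    · rw [List.takeWhile_cons_of_pos (by simpa using ha)]
      have hm' : m ∈ as := by
        rcases List.mem_cons.mp hm with h | h
        · exact absurd h.symm ha
        · exact h
      simpa using Nat.succ_lt_succ (ih hm')

private theorem length_tail_dropWhile_lt {w : List ℕ} (hw : w ≠ []) (p : ℕ → Bool) :
    ((w.dropWhile p).tail).length < w.length := by
  cases hd : w.dropWhile p with
  | nil => simpa using List.length_pos_iff.mpr hw
  | cons x xs =>
    have h1 : (x :: xs).length ≤ w.length := by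
      rw [← hd]; exact (List.dropWhile_sublist p).length_le
    simp only [List.tail_cons]
    exact lt_of_lt_of_le (by simp) h1

/-- The classical stack sort operator on words: `S(ε) = ε` and `S(L m R) = S(L) S(R) m`,
where `m` is the largest entry of the word `L m R`. -/
def stackSort : List ℕ → List ℕ
  | [] => []
  | a :: as =>
    let m := ((a :: as).max?).getD 0
    stackSort ((a :: as).takeWhile (· ≠ m)) ++
      stackSort (((a :: as).dropWhile (· ≠ m)).tail) ++ [m]
termination_by w => w.length
decreasing_by
  · refine length_takeWhile_ne_lt ?_
    have : (a :: as).max? = some (((a :: as).max?).getD 0) := by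
      cases h : (a :: as).max? with
      | none => simp [List.max?_eq_none_iff] at h
      | some b => simp
    exact List.max?_mem this
  · exact length_tail_dropWhile_lt (by simp) _

/-- The revstack sort operator `T = S ∘ rev`. -/
def revstackSort (w : List ℕ) : List ℕ := stackSort w.reverse

/-- The word of the identity permutation of `{1,…,n}`, namely `1 2 ⋯ n`. -/
def idPerm (n : ℕ) : List ℕ := List.range' 1 n

/-- `w` is (the word of) a permutation of `{1,…,n}`. -/
def IsPermWord (n : ℕ) (w : List ℕ) : Prop := w.Perm (idPerm n)

/-- `x` precedes `y` in the word `w`, i.e. the position of `x` is smaller than that of `y`. -/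
def Precedes (w : List ℕ) (x y : ℕ) : Prop := w.idxOf x < w.idxOf y

/-- `w` contains an occurrence of the pattern `132`: values `a < b < c` occurring in
the order `a, c, b`. -/
def Contains132 (w : List ℕ) : Prop :=
  ∃ a b c, a ∈ w ∧ b ∈ w ∧ c ∈ w ∧ a < b ∧ b < c ∧ Precedes w a c ∧ Precedes w c b

/-- `w` contains an occurrence of the pattern `2431`: values `a < b < c < d` occurring in
the order `b, d, c, a`. -/
def Contains2431 (w : List ℕ) : Prop :=
  ∃ a b c d, a ∈ w ∧ b ∈ w ∧ c ∈ w ∧ d ∈ w ∧ a < b ∧ b < c ∧ c < d ∧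
    Precedes w b d ∧ Precedes w d c ∧ Precedes w c a

/-- `w` contains an occurrence of the barred pattern `241 5̄ 3`: values `a < b < c < d`
occurring in the order `b, d, a, c` with no value `e > d` lying between `a` and `c` in `w`. -/
def ContainsBarred24153 (w : List ℕ) : Prop :=
  ∃ a b c d, a ∈ w ∧ b ∈ w ∧ c ∈ w ∧ d ∈ w ∧ a < b ∧ b < c ∧ c < d ∧
    Precedes w b d ∧ Precedes w d a ∧ Precedes w a c ∧
    ¬ ∃ e, e ∈ w ∧ d < e ∧ Precedes w a e ∧ Precedes w e c

/-- The number of descents of a word. -/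
def des (w : List ℕ) : ℕ := ((w.zip w.tail).filter (fun p => p.2 < p.1)).length

/-- The finset of all words of permutations of `{1,…,n}`. -/
def permsOf (n : ℕ) : Finset (List ℕ) := (idPerm n).permutations.toFinset

/-- The finset of `t`-revstack sortable permutations of `{1,…,n}`. -/
def revstackSortable (n t : ℕ) : Finset (List ℕ) :=
  (permsOf n).filter (fun w => revstackSort^[t] w = idPerm n)

/-- The finset of `t`-stack sortable permutations of `{1,…,n}`. -/
def stackSortable (n t : ℕ) : Finset (List ℕ) :=
  (permsOf n).filter (fun w => stackSort^[t] w = idPerm n)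

/-- The descent polynomial `W(A;x) = ∑_{π ∈ A} x^{1+des(π)}` of a set of permutations. -/
noncomputable def descPoly (A : Finset (List ℕ)) : Polynomial ℚ :=
  ∑ w ∈ A, Polynomial.X ^ (1 + des w)

/-- The `m`-th Eulerian polynomial `A_m(x) = ∑_{π ∈ S_m} x^{1+des(π)}`, with `A_0(x) = 1`. -/
noncomputable def eulerianPoly (m : ℕ) : Polynomial ℚ :=
  if m = 0 then 1 else descPoly (permsOf m)

/-- `v_t(n,i)`: the number of `t`-revstack sortable permutations of `{1,…,n}`
with exactly `i` descents. -/
def vNum (t n i : ℕ) : ℕ := ((revstackSortable n t).filter (fun w => des w = i)).card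

/-- `w_t(n,i)`: the number of `t`-stack sortable permutations of `{1,…,n}`
with exactly `i` descents. -/
def wNum (t n i : ℕ) : ℕ := ((stackSortable n t).filter (fun w => des w = i)).card

-- auxiliary lemmas; assumes definitions from proof.lean above
private theorem stackSort_eq {w : List ℕ} (hw : w ≠ []) :
    stackSort w = stackSort (w.takeWhile (· ≠ w.max?.getD 0)) ++
      stackSort ((w.dropWhile (· ≠ w.max?.getD 0)).tail) ++ [w.max?.getD 0] := by
  cases w with
  | nil => exact absurd rfl hw
  | cons a as => rw [stackSort]

private theorem max_spec {w : List ℕ} (hw : w ≠ []) :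
    w.max?.getD 0 ∈ w ∧ ∀ x ∈ w, x ≤ w.max?.getD 0 := by
  have h : w.max? = some (w.max?.getD 0) := by
    cases hh : w.max? with
    | none => rw [List.max?_eq_none_iff] at hh; exact absurd hh hw
    | some b => simp
  exact List.max?_eq_some_iff'.mp h

private theorem dropWhile_ne_eq {w : List ℕ} {m : ℕ} (hm : m ∈ w) :
    w.dropWhile (· ≠ m) = m :: (w.dropWhile (· ≠ m)).tail := by
  have hne : w.dropWhile (· ≠ m) ≠ [] := by
    intro h
    rw [List.dropWhile_eq_nil_iff] at h
    have := h m hm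
    simp at this
  have hh := List.head_dropWhile_not (fun x => decide (x ≠ m)) hne
  have hh3 : ¬ ((w.dropWhile (· ≠ m)).head hne ≠ m) := by
    simpa only [decide_eq_false_iff_not] using hh
  have hh2 : (w.dropWhile (· ≠ m)).head hne = m := not_not.mp hh3
  conv_lhs => rw [← List.cons_head_tail hne]
  rw [hh2]

private theorem decomp_eq {w : List ℕ} {m : ℕ} (hm : m ∈ w) :
    w = w.takeWhile (· ≠ m) ++ m :: (w.dropWhile (· ≠ m)).tail := by
  conv_lhs => rw [← List.takeWhile_append_dropWhile (p := fun x => decide (x ≠ m)) (l := w),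
    dropWhile_ne_eq hm]

private theorem not_mem_takeWhile_ne {w : List ℕ} {m : ℕ} :
    m ∉ w.takeWhile (· ≠ m) := by
  intro h
  have := List.mem_takeWhile_imp h
  simp at this

private theorem revstackSort_decomp (L R : List ℕ) (m : ℕ) (hL : m ∉ L) (hR : m ∉ R)
    (hLe : ∀ x ∈ L, x ≤ m) (hRe : ∀ x ∈ R, x ≤ m) :
    revstackSort (L ++ m :: R) = revstackSort R ++ revstackSort L ++ [m] := by
  have hrev : (L ++ m :: R).reverse = R.reverse ++ m :: L.reverse := by
    simp [List.reverse_append]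
  have hmax : (R.reverse ++ m :: L.reverse).max? = some m := by
    rw [List.max?_eq_some_iff']
    constructor
    · simp
    · intro b hb
      simp only [List.mem_append, List.mem_reverse, List.mem_cons] at hb
      rcases hb with h | h | h
      · exact hRe b h
      · exact le_of_eq h
      · exact hLe b h
  have hne : (R.reverse ++ m :: L.reverse) ≠ [] := by simp
  have htake : (R.reverse ++ m :: L.reverse).takeWhile (· ≠ m) = R.reverse := by
    rw [List.takeWhile_append]
    have h1 : R.reverse.takeWhile (fun x => decide (x ≠ m)) = R.reverse := by
      rw [List.takeWhile_eq_self_iff]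
      intro x hx
      simp only [List.mem_reverse] at hx
      simp only [decide_eq_true_eq]
      exact fun h => hR (h ▸ hx)
    rw [h1, if_pos rfl]
    simp [List.takeWhile_cons]
  have hdrop : ((R.reverse ++ m :: L.reverse).dropWhile (· ≠ m)).tail = L.reverse := by
    rw [List.dropWhile_append]
    have h1 : R.reverse.dropWhile (fun x => decide (x ≠ m)) = [] := by
      rw [List.dropWhile_eq_nil_iff]
      intro x hx
      simp only [List.mem_reverse] at hx
      simp only [decide_eq_true_eq]
      exact fun h => hR (h ▸ hx)
    rw [h1]
    simp [List.dropWhile_cons]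
  unfold revstackSort
  rw [hrev, stackSort_eq hne, hmax]
  simp only [Option.getD_some]
  rw [htake, hdrop]

private theorem stackSort_perm : ∀ (N : ℕ) (w : List ℕ), w.length ≤ N →
    (stackSort w).Perm w := by
  intro N
  induction N with
  | zero =>
    intro w hw
    rw [Nat.le_zero, List.length_eq_zero_iff] at hw
    subst hw
    rw [stackSort]
  | succ N ih =>
    intro w hw
    rcases eq_or_ne w [] with h | h
    · subst h; rw [stackSort]
    · set m := w.max?.getD 0 with hm
      obtain ⟨hmw, hmax⟩ := max_spec h
      set L := w.takeWhile (· ≠ m) with hLdef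
      set R := (w.dropWhile (· ≠ m)).tail with hRdef
      have hweq : w = L ++ m :: R := decomp_eq hmw
      have hlen : w.length = L.length + 1 + R.length := by
        rw [hweq]; simp; omega
      have hperm1 := ih L (by omega)
      have hperm2 := ih R (by omega)
      rw [stackSort_eq h, ← hm, ← hLdef, ← hRdef]
      have p1 : (stackSort L ++ stackSort R ++ [m]).Perm (L ++ R ++ [m]) :=
        (hperm1.append hperm2).append (List.Perm.refl [m])
      have p2 : (L ++ R ++ [m]).Perm (L ++ m :: R) := by
        rw [List.append_assoc]
        exact List.Perm.append_left L (List.perm_append_singleton m R)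
      rw [hweq]
      exact p1.trans p2

private theorem revstackSort_perm (w : List ℕ) : (revstackSort w).Perm w :=
  (stackSort_perm w.reverse.length w.reverse le_rfl).trans (List.reverse_perm w)
private theorem decomp_full {w : List ℕ} (hnd : w.Nodup) (hw : w ≠ []) :
    ∃ L R m, w = L ++ m :: R ∧ m ∉ L ∧ m ∉ R ∧ (∀ x ∈ w, x ≤ m) ∧
      revstackSort w = revstackSort R ++ revstackSort L ++ [m] ∧
      L.Nodup ∧ R.Nodup ∧ L.Disjoint (m :: R) := by
  obtain ⟨hmw, hmax⟩ := max_spec hw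
  set m := w.max?.getD 0 with hm
  set L := w.takeWhile (· ≠ m) with hLdef
  set R := (w.dropWhile (· ≠ m)).tail with hRdef
  have hweq : w = L ++ m :: R := decomp_eq hmw
  have hmL : m ∉ L := not_mem_takeWhile_ne
  have hnd' := hweq ▸ hnd
  rw [List.nodup_append] at hnd'
  obtain ⟨hndL, hndmR, hdisj⟩ := hnd'
  rw [List.nodup_cons] at hndmR
  refine ⟨L, R, m, hweq, hmL, hndmR.1, hmax, ?_, hndL, hndmR.2, fun _ hx hy => hdisj _ hx _ hy rfl⟩
  rw [hweq]
  refine revstackSort_decomp L R m hmL hndmR.1 ?_ ?_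
  · intro u hu; exact hmax u (hweq ▸ List.mem_append_left _ hu)
  · intro u hu
    exact hmax u (hweq ▸ List.mem_append_right _ (List.mem_cons_of_mem _ hu))

private theorem lemB : ∀ (N : ℕ) (w : List ℕ), w.length ≤ N → w.Nodup →
    ∀ x y z, x ∈ w → y ∈ w → z ∈ w → x < y → y < z →
    Precedes w x z → Precedes w z y → Precedes (revstackSort w) y x := by
  intro N
  induction N with
  | zero =>
    intro w hw _ x y z hx
    rw [Nat.le_zero, List.length_eq_zero_iff] at hw
    subst hw; cases hx
  | succ N ih =>
    intro w hw hnd x y z hx hy hz hxy hyz hxz hzy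
    have hne : w ≠ [] := by rintro rfl; cases hx
    obtain ⟨L, R, m, hweq, hmL, hmR, hmax, hT, hndL, hndR, hdisj⟩ := decomp_full hnd hne
    have hlen : w.length = L.length + 1 + R.length := by rw [hweq]; simp; omega
    have idxm : w.idxOf m = L.length := by
      rw [hweq, List.idxOf_append_of_notMem hmL, List.idxOf_cons_self]
      omega
    have idxL : ∀ u, u ∈ L → w.idxOf u = L.idxOf u := fun u hu => by
      rw [hweq, List.idxOf_append_of_mem hu]
    have idxR : ∀ u, u ∈ R → w.idxOf u = L.length + 1 + R.idxOf u := fun u hu => by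
      rw [hweq, List.idxOf_append_of_notMem
          (fun hL => hdisj hL (List.mem_cons_of_mem _ hu)),
        List.idxOf_cons_ne _ (by rintro rfl; exact hmR hu)]
      omega
    have memLR : ∀ u, u ∈ w → u ≠ m → u ∈ L ∨ u ∈ R := by
      intro u hu hum
      rw [hweq] at hu
      rcases List.mem_append.mp hu with h | h
      · exact Or.inl h
      · rcases List.mem_cons.mp h with h | h
        · exact absurd h hum
        · exact Or.inr h
    have hzlem : z ≤ m := hmax z hz
    have hxm : x ≠ m := by omega
    have hym : y ≠ m := by omega
    simp only [Precedes] at hxz hzy ⊢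
    rcases memLR x hx hxm with hxL | hxR <;> rcases memLR y hy hym with hyL | hyR
    · -- x ∈ L, y ∈ L : z must be in L
      have hyidx : L.idxOf y < L.length := List.idxOf_lt_length_iff.mpr hyL
      have hzL : z ∈ L := by
        by_cases hzm : z = m
        · exfalso; rw [hzm, idxm] at hzy; rw [idxL y hyL] at hzy; omega
        · rcases memLR z hz hzm with h | h
          · exact h
          · exfalso
            rw [idxR z h, idxL y hyL] at hzy; omega
      rw [idxL x hxL, idxL z hzL] at hxz
      rw [idxL z hzL, idxL y hyL] at hzy
      have hTL := ih L (by omega) hndL x y z hxL hyL hzL hxy hyz hxz hzy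
      simp only [Precedes] at hTL
      have hyTL : y ∈ revstackSort L := (revstackSort_perm L).mem_iff.mpr hyL
      have hxTL : x ∈ revstackSort L := (revstackSort_perm L).mem_iff.mpr hxL
      have hyTR : y ∉ revstackSort R := fun h =>
        hdisj hyL (List.mem_cons_of_mem _ ((revstackSort_perm R).mem_iff.mp h))
      have hxTR : x ∉ revstackSort R := fun h =>
        hdisj hxL (List.mem_cons_of_mem _ ((revstackSort_perm R).mem_iff.mp h))
      rw [hT,
        List.idxOf_append_of_mem (List.mem_append_right _ hyTL),
        List.idxOf_append_of_mem (List.mem_append_right _ hxTL),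
        List.idxOf_append_of_notMem hyTR,
        List.idxOf_append_of_notMem hxTR]
      omega
    · -- x ∈ L, y ∈ R : direct
      have hyTR : y ∈ revstackSort R := (revstackSort_perm R).mem_iff.mpr hyR
      have hxTL : x ∈ revstackSort L := (revstackSort_perm L).mem_iff.mpr hxL
      have hxTR : x ∉ revstackSort R := fun h =>
        hdisj hxL (List.mem_cons_of_mem _ ((revstackSort_perm R).mem_iff.mp h))
      have h1 : (revstackSort R).idxOf y < (revstackSort R).length :=
        List.idxOf_lt_length_iff.mpr hyTR
      rw [hT,
        List.idxOf_append_of_mem (List.mem_append_left _ hyTR),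
        List.idxOf_append_of_mem (List.mem_append_right _ hxTL),
        List.idxOf_append_of_mem hyTR,
        List.idxOf_append_of_notMem hxTR]
      omega
    · -- x ∈ R, y ∈ L : impossible
      exfalso
      have hyidx : L.idxOf y < L.length := List.idxOf_lt_length_iff.mpr hyL
      rw [idxR x hxR] at hxz
      rw [idxL y hyL] at hzy
      omega
    · -- x ∈ R, y ∈ R : z must be in R
      have hzR : z ∈ R := by
        by_cases hzm : z = m
        · exfalso; rw [hzm, idxm] at hxz; rw [idxR x hxR] at hxz; omega
        · rcases memLR z hz hzm with h | h
          · exfalso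
            have : L.idxOf z < L.length := List.idxOf_lt_length_iff.mpr h
            rw [idxL z h, idxR x hxR] at hxz; omega
          · exact h
      rw [idxR x hxR, idxR z hzR] at hxz
      rw [idxR z hzR, idxR y hyR] at hzy
      have hTR := ih R (by omega) hndR x y z hxR hyR hzR hxy hyz (by simp only [Precedes]; omega) (by simp only [Precedes]; omega)
      simp only [Precedes] at hTR
      have hyTR : y ∈ revstackSort R := (revstackSort_perm R).mem_iff.mpr hyR
      have hxTR : x ∈ revstackSort R := (revstackSort_perm R).mem_iff.mpr hxR
      rw [hT,
        List.idxOf_append_of_mem (List.mem_append_left _ hyTR),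
        List.idxOf_append_of_mem (List.mem_append_left _ hxTR),
        List.idxOf_append_of_mem hyTR,
        List.idxOf_append_of_mem hxTR]
      exact hTR

private theorem lemA : ∀ (N : ℕ) (w : List ℕ), w.length ≤ N → w.Nodup →
    ∀ x y, x ∈ w → y ∈ w → x < y → Precedes (revstackSort w) y x →
    ∃ z, z ∈ w ∧ y < z ∧ Precedes w x z ∧ Precedes w z y := by
  intro N
  induction N with
  | zero =>
    intro w hw _ x y hx
    rw [Nat.le_zero, List.length_eq_zero_iff] at hw
    subst hw; cases hx
  | succ N ih =>
    intro w hw hnd x y hx hy hxy hyx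
    have hne : w ≠ [] := by rintro rfl; cases hx
    obtain ⟨L, R, m, hweq, hmL, hmR, hmax, hT, hndL, hndR, hdisj⟩ := decomp_full hnd hne
    have hlen : w.length = L.length + 1 + R.length := by rw [hweq]; simp; omega
    have idxm : w.idxOf m = L.length := by
      rw [hweq, List.idxOf_append_of_notMem hmL, List.idxOf_cons_self]
      omega
    have idxL : ∀ u, u ∈ L → w.idxOf u = L.idxOf u := fun u hu => by
      rw [hweq, List.idxOf_append_of_mem hu]
    have idxR : ∀ u, u ∈ R → w.idxOf u = L.length + 1 + R.idxOf u := fun u hu => by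
      rw [hweq, List.idxOf_append_of_notMem
          (fun hL => hdisj hL (List.mem_cons_of_mem _ hu)),
        List.idxOf_cons_ne _ (by rintro rfl; exact hmR hu)]
      omega
    have memLR : ∀ u, u ∈ w → u ≠ m → u ∈ L ∨ u ∈ R := by
      intro u hu hum
      rw [hweq] at hu
      rcases List.mem_append.mp hu with h | h
      · exact Or.inl h
      · rcases List.mem_cons.mp h with h | h
        · exact absurd h hum
        · exact Or.inr h
    have hxlem : x ≤ m := hmax x hx
    have hxm : x ≠ m := by have := hmax y hy; omega
    simp only [Precedes] at hyx
    have memT : ∀ u, u ∈ L ∨ u ∈ R →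
        u ∈ revstackSort R ++ revstackSort L := by
      intro u hu
      rcases hu with h | h
      · exact List.mem_append_right _ ((revstackSort_perm L).mem_iff.mpr h)
      · exact List.mem_append_left _ ((revstackSort_perm R).mem_iff.mpr h)
    by_cases hym : y = m
    · -- impossible: m is last in revstackSort w
      exfalso
      have hmT : m ∉ revstackSort R ++ revstackSort L := by
        intro h
        rcases List.mem_append.mp h with h | h
        · exact hmR ((revstackSort_perm R).mem_iff.mp h)
        · exact hmL ((revstackSort_perm L).mem_iff.mp h)
      have hxT : x ∈ revstackSort R ++ revstackSort L := memT x (memLR x hx hxm)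
      have h2 := List.idxOf_lt_length_iff.mpr hxT
      rw [hT, List.idxOf_append_of_notMem (by rw [hym]; exact hmT),
        List.idxOf_append_of_mem hxT, hym, List.idxOf_cons_self] at hyx
      omega
    · rcases memLR x hx hxm with hxL | hxR <;> rcases memLR y hy hym with hyL | hyR
      · -- both in L
        have hyTL : y ∈ revstackSort L := (revstackSort_perm L).mem_iff.mpr hyL
        have hxTL : x ∈ revstackSort L := (revstackSort_perm L).mem_iff.mpr hxL
        have hyTR : y ∉ revstackSort R := fun h =>
          hdisj hyL (List.mem_cons_of_mem _ ((revstackSort_perm R).mem_iff.mp h))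
        have hxTR : x ∉ revstackSort R := fun h =>
          hdisj hxL (List.mem_cons_of_mem _ ((revstackSort_perm R).mem_iff.mp h))
        rw [hT,
          List.idxOf_append_of_mem (List.mem_append_right _ hyTL),
          List.idxOf_append_of_mem (List.mem_append_right _ hxTL),
          List.idxOf_append_of_notMem hyTR,
          List.idxOf_append_of_notMem hxTR] at hyx
        have hP : Precedes (revstackSort L) y x := by simp only [Precedes]; omega
        obtain ⟨z, hzL, hyz, h1, h2⟩ := ih L (by omega) hndL x y hxL hyL hxy hP
        simp only [Precedes] at h1 h2 ⊢
        refine ⟨z, hweq ▸ List.mem_append_left _ hzL, hyz, ?_, ?_⟩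
        · rw [idxL x hxL, idxL z hzL]; exact h1
        · rw [idxL z hzL, idxL y hyL]; exact h2
      · -- x ∈ L, y ∈ R : take z = m
        refine ⟨m, hweq ▸ List.mem_append_right _ (List.mem_cons_self),
          lt_of_le_of_ne (hmax y hy) hym, ?_, ?_⟩
        · simp only [Precedes]
          rw [idxL x hxL, idxm]
          exact List.idxOf_lt_length_iff.mpr hxL
        · simp only [Precedes]
          rw [idxm, idxR y hyR]
          omega
      · -- x ∈ R, y ∈ L : contradicts hyx
        exfalso
        have hyTL : y ∈ revstackSort L := (revstackSort_perm L).mem_iff.mpr hyL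
        have hxTR : x ∈ revstackSort R := (revstackSort_perm R).mem_iff.mpr hxR
        have hyTR : y ∉ revstackSort R := fun h =>
          hdisj hyL (List.mem_cons_of_mem _ ((revstackSort_perm R).mem_iff.mp h))
        have h1 : (revstackSort R).idxOf x < (revstackSort R).length :=
          List.idxOf_lt_length_iff.mpr hxTR
        rw [hT,
          List.idxOf_append_of_mem (List.mem_append_right _ hyTL),
          List.idxOf_append_of_mem (List.mem_append_left _ hxTR),
          List.idxOf_append_of_notMem hyTR,
          List.idxOf_append_of_mem hxTR] at hyx
        omega
      · -- both in R
        have hyTR : y ∈ revstackSort R := (revstackSort_perm R).mem_iff.mpr hyR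
        have hxTR : x ∈ revstackSort R := (revstackSort_perm R).mem_iff.mpr hxR
        rw [hT,
          List.idxOf_append_of_mem (List.mem_append_left _ hyTR),
          List.idxOf_append_of_mem (List.mem_append_left _ hxTR),
          List.idxOf_append_of_mem hyTR,
          List.idxOf_append_of_mem hxTR] at hyx
        have hP : Precedes (revstackSort R) y x := hyx
        obtain ⟨z, hzR, hyz, h1, h2⟩ := ih R (by omega) hndR x y hxR hyR hxy hP
        simp only [Precedes] at h1 h2 ⊢
        refine ⟨z, hweq ▸ List.mem_append_right _ (List.mem_cons_of_mem _ hzR), hyz, ?_, ?_⟩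
        · rw [idxR x hxR, idxR z hzR]; omega
        · rw [idxR z hzR, idxR y hyR]; omega

theorem pattern_in_revstack_image
    (n : ℕ) (σ : List ℕ) (hσ : IsPermWord n σ) (a b c : ℕ)
    (haT : a ∈ revstackSort σ) (hbT : b ∈ revstackSort σ) (hcT : c ∈ revstackSort σ)
    (hab : a < b) (hbc : b < c)
    (hac : Precedes (revstackSort σ) a c) (hcb : Precedes (revstackSort σ) c b) :
    ∃ d, d ∈ σ ∧ c < d ∧
      ((Precedes σ b d ∧ Precedes σ d c ∧ Precedes σ c a) ∨
       (Precedes σ b d ∧ Precedes σ d a ∧ Precedes σ a c ∧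
         ¬ ∃ e, e ∈ σ ∧ c < e ∧ Precedes σ b d ∧ Precedes σ d a ∧
           Precedes σ a e ∧ Precedes σ e c)) := by
  have hndid : (idPerm n).Nodup := List.nodup_range' (s := 1) (n := n)
  have hnd : σ.Nodup := hσ.nodup_iff.mpr hndid
  have ha : a ∈ σ := (revstackSort_perm σ).mem_iff.mp haT
  have hb : b ∈ σ := (revstackSort_perm σ).mem_iff.mp hbT
  have hc : c ∈ σ := (revstackSort_perm σ).mem_iff.mp hcT
  obtain ⟨d, hd, hcd, hbd, hdc⟩ := lemA σ.length σ le_rfl hnd b c hb hc hbc hcb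
  have H : ∀ e, e ∈ σ → c < e → Precedes σ a e → Precedes σ e c → False := by
    intro e he hce hae hec
    have hca := lemB σ.length σ le_rfl hnd a c e ha hc he (hab.trans hbc) hce hae hec
    simp only [Precedes] at hac hca
    omega
  rcases Nat.lt_trichotomy (σ.idxOf c) (σ.idxOf a) with h | h | h
  · exact ⟨d, hd, hcd, Or.inl ⟨hbd, hdc, h⟩⟩
  · exact absurd ((List.idxOf_inj hc).mp h) (by omega)
  · rcases Nat.lt_trichotomy (σ.idxOf d) (σ.idxOf a) with h2 | h2 | h2
    · refine ⟨d, hd, hcd, Or.inr ⟨hbd, h2, h, ?_⟩⟩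
      rintro ⟨e, he, hce, -, -, hae, hec⟩
      exact H e he hce hae hec
    · exact absurd ((List.idxOf_inj hd).mp h2) (by omega)
    · exact absurd hdc (fun hdc' => H d hd hcd h2 hdc')
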